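/- arXiv:2212.14514 — 2 statements merged into one kernel-verified Lean document; each statement's English description precedes it below -/
import Mathlib

section
/- Let f ∈ C¹(ℝ^d) have compactly supported gradient with ∫_{ℝ^d} ‖∇f(x)‖₂ dx < ∞, let Ω ⊆ ℝ^d be a bounded measurable set, and let ε > 0. Then ∫_Ω ∫_Ω |f(x') - f(x)| 1{‖x' - x‖₂ ≤ ε} dx' dx ≤ C_d ε^{d+1} ∫_{ℝ^d} ‖∇f(x)‖₂ dx, where C_d = ∫_{B(0,1)} ‖z‖₂ dz depends only on d. -/
open MeasureTheory Metric Set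

section stmt15aux

variable {d : ℕ}

local notation "Eu" => EuclideanSpace ℝ (Fin d)

lemma stmt15_norm_grad (f : Eu → ℝ) (x : Eu) :
    ‖gradient f x‖ = ‖fderiv ℝ f x‖ := by
  rw [gradient]
  exact LinearIsometryEquiv.norm_map _ _

lemma stmt15_ftc (f : Eu → ℝ) (hf : ContDiff ℝ 1 f) (x v : Eu) :
    |f (x + v) - f x| ≤ ‖v‖ * ∫ t in (0:ℝ)..1, ‖fderiv ℝ f (x + t • v)‖ := by
  have hdf : Differentiable ℝ f := hf.differentiable one_ne_zero
  have hcf : Continuous (fderiv ℝ f) := hf.continuous_fderiv one_ne_zero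
  have hline : Continuous fun t : ℝ => x + t • v := by continuity
  have hcont : Continuous fun t : ℝ => (fderiv ℝ f (x + t • v)) v :=
    (hcf.comp hline).clm_apply continuous_const
  have hder : ∀ t : ℝ, HasDerivAt (fun t : ℝ => f (x + t • v))
      ((fderiv ℝ f (x + t • v)) v) t := by
    intro t
    have h2 : HasDerivAt (fun t : ℝ => x + t • v) v t := by
      simpa using ((hasDerivAt_id t).smul_const v).const_add x
    exact ((hdf (x + t • v)).hasFDerivAt.comp_hasDerivAt t h2)
  have heq : f (x + v) - f x = ∫ t in (0:ℝ)..1, (fderiv ℝ f (x + t • v)) v := by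
    rw [intervalIntegral.integral_eq_sub_of_hasDerivAt (fun t _ => hder t)
      (hcont.intervalIntegrable 0 1)]
    simp
  rw [heq]
  calc |∫ t in (0:ℝ)..1, (fderiv ℝ f (x + t • v)) v|
      ≤ ∫ t in (0:ℝ)..1, |(fderiv ℝ f (x + t • v)) v| :=
        intervalIntegral.abs_integral_le_integral_abs zero_le_one
    _ ≤ ∫ t in (0:ℝ)..1, ‖fderiv ℝ f (x + t • v)‖ * ‖v‖ := by
        refine intervalIntegral.integral_mono_on zero_le_one
          (hcont.abs.intervalIntegrable 0 1)
          (((hcf.comp hline).norm.mul continuous_const).intervalIntegrable 0 1) ?_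
        intro t _
        exact (fderiv ℝ f (x + t • v)).le_opNorm v
    _ = ‖v‖ * ∫ t in (0:ℝ)..1, ‖fderiv ℝ f (x + t • v)‖ := by
        rw [intervalIntegral.integral_mul_const, mul_comm]

/-- Continuity of the averaged function. -/
lemma stmt15_Tcont (g : Eu → ℝ) (hgc : Continuous g) :
    Continuous fun p : Eu × Eu => ∫ t in (0:ℝ)..1, g (p.1 + t • p.2) := by
  apply intervalIntegral.continuous_parametric_intervalIntegral_of_continuous'
  exact hgc.comp (by fun_prop : Continuous fun q : (Eu × Eu) × ℝ => q.1.1 + q.2 • q.1.2)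

/-- Nonnegativity of the averaged function. -/
lemma stmt15_T0 (g : Eu → ℝ) (hg0 : ∀ y, 0 ≤ g y) (x v : Eu) :
    0 ≤ ∫ t in (0:ℝ)..1, g (x + t • v) :=
  intervalIntegral.integral_nonneg zero_le_one (fun t _ => hg0 _)

/-- Upper bound for the averaged function. -/
lemma stmt15_TM (g : Eu → ℝ) (hgc : Continuous g) {M : ℝ} (hM : ∀ y, g y ≤ M) (x v : Eu) :
    (∫ t in (0:ℝ)..1, g (x + t • v)) ≤ M := by
  have : (∫ t in (0:ℝ)..1, g (x + t • v)) ≤ ∫ _t in (0:ℝ)..1, M := by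
    refine intervalIntegral.integral_mono_on zero_le_one
      ((hgc.comp (by fun_prop)).intervalIntegrable 0 1) intervalIntegrable_const ?_
    exact fun t _ => hM _
  simpa using this

/-- Integrability and value of the full-space integral of the averaged function. -/
lemma stmt15_TI (g : Eu → ℝ) (hgc : Continuous g) (hgint : Integrable g)
    (hg0 : ∀ y, 0 ≤ g y) (w : Eu) :
    Integrable (fun x : Eu => ∫ t in (0:ℝ)..1, g (x + t • w)) volume ∧
      (∫ x : Eu, ∫ t in (0:ℝ)..1, g (x + t • w)) = ∫ y, g y := by
  have hmeas : AEStronglyMeasurable (fun p : ℝ × Eu => g (p.2 + p.1 • w))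
      ((volume.restrict (Ioc (0:ℝ) 1)).prod volume) :=
    (hgc.comp (by fun_prop : Continuous fun p : ℝ × Eu => p.2 + p.1 • w)).aestronglyMeasurable
  have hslice : ∀ t : ℝ, Integrable (fun x : Eu => g (x + t • w)) volume :=
    fun t => hgint.comp_add_right (t • w)
  have hnorm : (fun t : ℝ => ∫ x : Eu, ‖g (x + t • w)‖) = fun _ => ∫ y, g y := by
    funext t
    simp_rw [Real.norm_of_nonneg (hg0 _)]
    exact integral_add_right_eq_self g (t • w)
  have hprod : Integrable (fun p : ℝ × Eu => g (p.2 + p.1 • w))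
      ((volume.restrict (Ioc (0:ℝ) 1)).prod volume) := by
    rw [integrable_prod_iff hmeas]
    refine ⟨ae_of_all _ (fun t => hslice t), ?_⟩
    rw [hnorm]
    exact integrable_const _
  have hTrepr : (fun x : Eu => ∫ t in (0:ℝ)..1, g (x + t • w))
      = fun x => ∫ t in Ioc (0:ℝ) 1, g (x + t • w) := by
    funext x
    exact intervalIntegral.integral_of_le zero_le_one
  constructor
  · rw [hTrepr]
    exact hprod.integral_prod_right
  · rw [hTrepr]
    have hswap := integral_integral_swap (f := fun (t : ℝ) (x : Eu) => g (x + t • w)) hprod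
    rw [← hswap]
    have hval : ∀ t : ℝ, (∫ x : Eu, g (x + t • w)) = ∫ y, g y :=
      fun t => integral_add_right_eq_self g (t • w)
    simp_rw [hval]
    simp [Real.volume_Ioc]

/-- Scaling for integrals of functions supported in a ball. -/
lemma stmt15_scale (φ : Eu → ℝ) {ε : ℝ} (hε : 0 < ε) :
    (∫ v, (closedBall (0:Eu) ε).indicator φ v)
      = ε ^ d * ∫ z in closedBall (0:Eu) 1, φ (ε • z) := by
  set F : Eu → ℝ := (closedBall (0:Eu) ε).indicator φ with hFdef
  have h2 := Measure.integral_comp_smul (volume : Measure Eu) F ε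
  rw [finrank_euclideanSpace_fin] at h2
  have hεpow : |((ε:ℝ) ^ d)⁻¹| = (ε ^ d)⁻¹ := abs_of_pos (inv_pos.2 (pow_pos hε d))
  have h3 : ∫ v, F v = ε ^ d * ∫ z, F (ε • z) := by
    rw [h2, hεpow, smul_eq_mul, ← mul_assoc, mul_inv_cancel₀ (pow_ne_zero d hε.ne'), one_mul]
  have h4 : ∀ z : Eu, F (ε • z)
      = (closedBall (0:Eu) 1).indicator (fun z => φ (ε • z)) z := by
    intro z
    by_cases h : z ∈ closedBall (0:Eu) 1
    · have hz : ‖z‖ ≤ 1 := by simpa [mem_closedBall, dist_zero_right] using h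
      have hmem : ε • z ∈ closedBall (0:Eu) ε := by
        simp only [mem_closedBall, dist_zero_right, norm_smul, Real.norm_eq_abs,
          abs_of_pos hε]
        nlinarith
      rw [indicator_of_mem h, hFdef]
      rw [indicator_of_mem hmem]
    · have hz : ¬ ‖z‖ ≤ 1 := by simpa [mem_closedBall, dist_zero_right] using h
      have hmem : ε • z ∉ closedBall (0:Eu) ε := by
        simp only [mem_closedBall, dist_zero_right, norm_smul, Real.norm_eq_abs,
          abs_of_pos hε]
        push_neg at hz ⊢
        nlinarith [norm_nonneg z]
      rw [indicator_of_notMem h, hFdef]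
      rw [indicator_of_notMem hmem]
  rw [h3]
  congr 1
  rw [← integral_indicator measurableSet_closedBall]
  exact integral_congr_ae (ae_of_all _ h4)

/-- Closed ball integral equals open ball integral. -/
lemma stmt15_cb (hd : 0 < d) :
    (∫ z in closedBall (0:Eu) 1, ‖z‖) = ∫ z in ball (0:Eu) 1, ‖z‖ := by
  haveI : Nontrivial Eu :=
    Module.nontrivial_of_finrank_pos (R := ℝ)
      (by rw [finrank_euclideanSpace_fin]; exact hd)
  refine setIntegral_congr_set ?_
  rw [MeasureTheory.ae_eq_set]
  constructor
  · rw [closedBall_diff_ball]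
    exact Measure.addHaar_sphere volume 0 1
  · rw [diff_eq_empty.2 ball_subset_closedBall]
    exact measure_empty

/-- Inner integral bound. -/
lemma stmt15_inner (f : Eu → ℝ) (hf : ContDiff ℝ 1 f) (g : Eu → ℝ)
    (hfg : (fun y : Eu => ‖fderiv ℝ f y‖) = g) (hgc : Continuous g) {M : ℝ}
    (hM : ∀ y, g y ≤ M) (hM0 : 0 ≤ M) (Ω : Set Eu) (hΩm : MeasurableSet Ω)
    {ε : ℝ} (hε : 0 < ε) (x : Eu) :
    (∫ x' in Ω, |f x' - f x| * (if ‖x' - x‖ ≤ ε then 1 else 0))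
      ≤ ε ^ (d + 1)
        * ∫ z in closedBall (0:Eu) 1, ‖z‖ * ∫ t in (0:ℝ)..1, g (x + t • (ε • z)) := by
  have hg0 : ∀ y, 0 ≤ g y := by
    intro y
    rw [← congrFun hfg y]
    exact norm_nonneg _
  set T : Eu → Eu → ℝ := fun x v => ∫ t in (0:ℝ)..1, g (x + t • v) with hTdef
  have hT0 : ∀ x v, 0 ≤ T x v := stmt15_T0 g hg0
  have hTM : ∀ x v, T x v ≤ M := stmt15_TM g hgc hM
  have hTcont : Continuous fun p : Eu × Eu => T p.1 p.2 := stmt15_Tcont g hgc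
  have hftc : ∀ v : Eu, |f (x + v) - f x| ≤ ‖v‖ * T x v := by
    intro v
    have h := stmt15_ftc f hf x v
    have heq : (∫ t in (0:ℝ)..1, ‖fderiv ℝ f (x + t • v)‖)
        = ∫ t in (0:ℝ)..1, g (x + t • v) := by
      refine intervalIntegral.integral_congr fun t _ => ?_
      exact congrFun hfg (x + t • v)
    rw [heq] at h
    simp only [hTdef]
    exact h
  set B : Eu → ℝ :=
    fun x' => (closedBall (0:Eu) ε).indicator (fun v => ‖v‖ * T x v) (x' - x) with hBdef
  have hB0 : ∀ x', 0 ≤ B x' := fun x' =>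
    indicator_nonneg (fun v _ => mul_nonneg (norm_nonneg v) (hT0 x v)) _
  have hKB : ∀ x', |f x' - f x| * (if ‖x' - x‖ ≤ ε then (1:ℝ) else 0) ≤ B x' := by
    intro x'
    by_cases h : ‖x' - x‖ ≤ ε
    · rw [if_pos h, mul_one]
      have hmem : x' - x ∈ closedBall (0:Eu) ε := by
        simpa [mem_closedBall, dist_zero_right] using h
      simp only [hBdef]
      rw [indicator_of_mem hmem]
      have := hftc (x' - x)
      simpa using this
    · rw [if_neg h, mul_zero]
      exact hB0 x'
  have hBle : ∀ x', B x' ≤ ε * M := by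
    intro x'
    by_cases h : x' - x ∈ closedBall (0:Eu) ε
    · simp only [hBdef]
      rw [indicator_of_mem h]
      have h1 : ‖x' - x‖ ≤ ε := by simpa [mem_closedBall, dist_zero_right] using h
      exact mul_le_mul h1 (hTM x _) (hT0 x _) hε.le
    · simp only [hBdef]
      rw [indicator_of_notMem h]
      exact mul_nonneg hε.le hM0
  have hDint : Integrable ((closedBall x ε).indicator fun _ => ε * M) volume :=
    (integrable_indicator_iff measurableSet_closedBall).2
      (integrableOn_const measure_closedBall_lt_top.ne)
  have hBD : ∀ x', ‖B x'‖ ≤ (closedBall x ε).indicator (fun _ => ε * M) x' := by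
    intro x'
    rw [Real.norm_of_nonneg (hB0 x')]
    by_cases h : ‖x' - x‖ ≤ ε
    · have hmem : x' ∈ closedBall x ε := by
        simpa [mem_closedBall, dist_eq_norm] using h
      rw [indicator_of_mem hmem]
      exact hBle x'
    · have hmem : x' - x ∉ closedBall (0:Eu) ε := by
        simpa [mem_closedBall, dist_zero_right] using h
      have hB0' : B x' = 0 := by simp only [hBdef]; rw [indicator_of_notMem hmem]
      rw [hB0']
      exact indicator_nonneg (fun _ _ => mul_nonneg hε.le hM0) _
  have hKD : ∀ x', ‖|f x' - f x| * (if ‖x' - x‖ ≤ ε then (1:ℝ) else 0)‖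
      ≤ (closedBall x ε).indicator (fun _ => ε * M) x' := by
    intro x'
    have h0 : 0 ≤ |f x' - f x| * (if ‖x' - x‖ ≤ ε then (1:ℝ) else 0) :=
      mul_nonneg (abs_nonneg _) (by positivity)
    rw [Real.norm_of_nonneg h0]
    have hb := hBD x'
    rw [Real.norm_of_nonneg (hB0 x')] at hb
    exact (hKB x').trans hb
  have hBcont : Continuous fun v : Eu => ‖v‖ * T x v :=
    continuous_norm.mul (hTcont.comp (continuous_const.prodMk continuous_id))
  have hBint : Integrable B volume := by
    refine hDint.mono' ?_ (ae_of_all _ hBD)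
    have hm1 : Measurable ((closedBall (0:Eu) ε).indicator (fun v => ‖v‖ * T x v)) :=
      hBcont.measurable.indicator measurableSet_closedBall
    exact (hm1.comp (measurable_sub_const x)).aestronglyMeasurable
  have hKint : Integrable
      (fun x' => |f x' - f x| * (if ‖x' - x‖ ≤ ε then (1:ℝ) else 0)) volume := by
    refine hDint.mono' ?_ (ae_of_all _ hKD)
    have h1 : Measurable fun x' : Eu => |f x' - f x| :=
      (hf.continuous.sub continuous_const).abs.measurable
    have hsetm : MeasurableSet {x' : Eu | ‖x' - x‖ ≤ ε} :=
      (isClosed_le (by fun_prop) continuous_const).measurableSet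
    exact (h1.mul (Measurable.ite hsetm measurable_const measurable_const)).aestronglyMeasurable
  have hstep1 : (∫ x' in Ω, |f x' - f x| * (if ‖x' - x‖ ≤ ε then (1:ℝ) else 0))
      ≤ ∫ x', B x' := by
    calc (∫ x' in Ω, |f x' - f x| * (if ‖x' - x‖ ≤ ε then (1:ℝ) else 0))
        ≤ ∫ x' in Ω, B x' :=
          setIntegral_mono_on hKint.integrableOn hBint.integrableOn hΩm
            (fun x' _ => hKB x')
      _ ≤ ∫ x', B x' := setIntegral_le_integral hBint (ae_of_all _ hB0)
  refine hstep1.trans_eq ?_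
  have h1 : (∫ x', B x')
      = ∫ v, (closedBall (0:Eu) ε).indicator (fun v => ‖v‖ * T x v) v := by
    simp only [hBdef]
    exact integral_sub_right_eq_self _ x
  rw [h1, stmt15_scale (fun v => ‖v‖ * T x v) hε]
  have h2 : ∀ z : Eu, ‖ε • z‖ * T x (ε • z) = ε * (‖z‖ * T x (ε • z)) := by
    intro z
    rw [norm_smul, Real.norm_eq_abs, abs_of_pos hε]
    ring
  simp_rw [h2]
  rw [integral_const_mul]
  rw [pow_succ]
  ring

/-- Outer integral bound. -/
lemma stmt15_outer (g : Eu → ℝ) (hgc : Continuous g) (hgint : Integrable g)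
    (hg0 : ∀ y, 0 ≤ g y) {M : ℝ} (hM : ∀ y, g y ≤ M) (Ω : Set Eu)
    (hΩm : MeasurableSet Ω) (hΩfin : volume Ω < ⊤) {ε : ℝ} (hε : 0 < ε) :
    (∫ x in Ω, ε ^ (d + 1)
        * ∫ z in closedBall (0:Eu) 1, ‖z‖ * ∫ t in (0:ℝ)..1, g (x + t • (ε • z)))
      ≤ ε ^ (d + 1) * ((∫ z in closedBall (0:Eu) 1, ‖z‖) * ∫ y, g y) := by
  haveI hΩfinI : IsFiniteMeasure (volume.restrict Ω) :=
    ⟨by rwa [Measure.restrict_apply_univ]⟩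
  haveI hcBfinI : IsFiniteMeasure (volume.restrict (closedBall (0:Eu) 1)) :=
    ⟨by rw [Measure.restrict_apply_univ]; exact measure_closedBall_lt_top⟩
  set T : Eu → Eu → ℝ := fun x v => ∫ t in (0:ℝ)..1, g (x + t • v) with hTdef
  have hT0 : ∀ x v, 0 ≤ T x v := stmt15_T0 g hg0
  have hTM : ∀ x v, T x v ≤ M := stmt15_TM g hgc hM
  have hTcont : Continuous fun p : Eu × Eu => T p.1 p.2 := stmt15_Tcont g hgc
  show (∫ x in Ω, ε ^ (d + 1) * ∫ z in closedBall (0:Eu) 1, ‖z‖ * T x (ε • z))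
      ≤ ε ^ (d + 1) * ((∫ z in closedBall (0:Eu) 1, ‖z‖) * ∫ y, g y)
  rw [integral_const_mul]
  refine mul_le_mul_of_nonneg_left ?_ (by positivity)
  have huc : Continuous fun p : Eu × Eu => ‖p.2‖ * T p.1 (ε • p.2) :=
    (continuous_norm.comp continuous_snd).mul
      (hTcont.comp (continuous_fst.prodMk (continuous_snd.const_smul ε)))
  have hprodint : Integrable (Function.uncurry fun (x : Eu) (z : Eu) => ‖z‖ * T x (ε • z))
      ((volume.restrict Ω).prod (volume.restrict (closedBall (0:Eu) 1))) := by
    refine Integrable.mono' (g := fun _ => 1 * M) (integrable_const _) ?_ ?_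
    · exact huc.aestronglyMeasurable
    · rw [Measure.prod_restrict]
      refine ae_restrict_of_forall_mem (hΩm.prod measurableSet_closedBall) ?_
      rintro ⟨x, z⟩ hp
      have hz1 : ‖z‖ ≤ 1 := by
        simpa [mem_closedBall, dist_zero_right] using hp.2
      have hval : ‖‖z‖ * T x (ε • z)‖ ≤ 1 * M := by
        rw [Real.norm_of_nonneg (mul_nonneg (norm_nonneg _) (hT0 _ _))]
        exact mul_le_mul hz1 (hTM _ _) (hT0 _ _) one_pos.le
      simpa [Function.uncurry] using hval
  have hswap := integral_integral_swap
    (f := fun (x z : Eu) => ‖z‖ * T x (ε • z)) hprodint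
  calc (∫ x in Ω, ∫ z in closedBall (0:Eu) 1, ‖z‖ * T x (ε • z))
      = ∫ z in closedBall (0:Eu) 1, ∫ x in Ω, ‖z‖ * T x (ε • z) := hswap
    _ = ∫ z in closedBall (0:Eu) 1, ‖z‖ * ∫ x in Ω, T x (ε • z) := by
        refine integral_congr_ae (ae_of_all _ fun z => ?_)
        exact integral_const_mul ‖z‖ _
    _ ≤ ∫ z in closedBall (0:Eu) 1, ‖z‖ * ∫ y, g y := by
        refine setIntegral_mono_on ?_ ?_ measurableSet_closedBall ?_
        · refine Integrable.mono' (g := fun _ => 1 * (M * (volume Ω).toReal))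
            (integrable_const _) ?_ ?_
          · have hsm : StronglyMeasurable fun z : Eu => ∫ x in Ω, T x (ε • z) := by
              apply StronglyMeasurable.integral_prod_right
              exact (hTcont.comp (continuous_snd.prodMk
                (continuous_fst.const_smul ε))).stronglyMeasurable
            exact (continuous_norm.stronglyMeasurable.mul hsm).aestronglyMeasurable
          · refine ae_restrict_of_forall_mem measurableSet_closedBall ?_
            intro z hz
            have hz1 : ‖z‖ ≤ 1 := by
              simpa [mem_closedBall, dist_zero_right] using hz
            have habs : ‖∫ x in Ω, T x (ε • z)‖ ≤ M * (volume Ω).toReal := by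
              refine norm_setIntegral_le_of_norm_le_const hΩfin ?_
              intro x _
              rw [Real.norm_of_nonneg (hT0 _ _)]
              exact hTM _ _
            rw [norm_mul, norm_norm]
            exact mul_le_mul hz1 habs (norm_nonneg _) one_pos.le
        · exact ((continuous_norm.mul continuous_const).continuousOn).integrableOn_compact
            (isCompact_closedBall _ _)
        · intro z _
          have h1 := setIntegral_le_integral (s := Ω) (stmt15_TI g hgc hgint hg0 (ε • z)).1
            (ae_of_all _ fun x => stmt15_T0 g hg0 x (ε • z))
          rw [(stmt15_TI g hgc hgint hg0 (ε • z)).2] at h1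
          exact mul_le_mul_of_nonneg_left h1 (norm_nonneg z)
    _ = (∫ z in closedBall (0:Eu) 1, ‖z‖) * ∫ y, g y := integral_mul_const _ _

end stmt15aux

set_option maxHeartbeats 1000000 in
/-- For `f ∈ C¹(ℝ^d)` with compactly supported, integrable gradient, a bounded
measurable `Ω`, and `ε > 0`:
`∫_Ω ∫_Ω |f(x') - f(x)| 1{‖x'-x‖ ≤ ε} dx' dx ≤ C_d ε^{d+1} ∫ ‖∇f‖`,
with `C_d = ∫_{B(0,1)} ‖z‖ dz`. -/
theorem stmt15 {d : ℕ} (hd : 0 < d) (f : EuclideanSpace ℝ (Fin d) → ℝ)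
    (hf : ContDiff ℝ 1 f) (hsupp : HasCompactSupport (gradient f))
    (hint : Integrable (fun x => ‖gradient f x‖))
    (Ω : Set (EuclideanSpace ℝ (Fin d))) (hΩm : MeasurableSet Ω)
    (hΩb : Bornology.IsBounded Ω) (ε : ℝ) (hε : 0 < ε) :
    ∫ x in Ω, ∫ x' in Ω, |f x' - f x| * (if ‖x' - x‖ ≤ ε then 1 else 0)
      ≤ (∫ z in Metric.ball (0 : EuclideanSpace ℝ (Fin d)) 1, ‖z‖)
          * ε ^ (d + 1) * ∫ x, ‖gradient f x‖ := by
  obtain ⟨g, hfg⟩ : ∃ g : EuclideanSpace ℝ (Fin d) → ℝ,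
      (fun y : EuclideanSpace ℝ (Fin d) => ‖fderiv ℝ f y‖) = g := ⟨_, rfl⟩
  have hgrad : (fun x : EuclideanSpace ℝ (Fin d) => ‖gradient f x‖) = g := by
    rw [← hfg]
    exact funext (stmt15_norm_grad f)
  rw [show (∫ x, ‖gradient f x‖) = ∫ y, g y from by rw [hgrad]]
  rw [hgrad] at hint
  have hgc : Continuous g := by rw [← hfg]; exact (hf.continuous_fderiv one_ne_zero).norm
  have hg0 : ∀ y, 0 ≤ g y := by
    intro y; rw [← congrFun hfg y]; exact norm_nonneg _
  have hsupp' : HasCompactSupport g := by rw [← hgrad]; exact hsupp.norm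
  obtain ⟨M, hM⟩ := hsupp'.exists_bound_of_continuous hgc
  have hM' : ∀ y, g y ≤ M := fun y => (le_abs_self _).trans (hM y)
  have hM0 : 0 ≤ M := (hg0 0).trans (hM' 0)
  have hΩfin : volume Ω < ⊤ := hΩb.measure_lt_top
  haveI : IsFiniteMeasure (volume.restrict Ω) := ⟨by rwa [Measure.restrict_apply_univ]⟩
  have hTcont : Continuous fun p : EuclideanSpace ℝ (Fin d) × EuclideanSpace ℝ (Fin d) =>
      ∫ t in (0:ℝ)..1, g (p.1 + t • p.2) := stmt15_Tcont g hgc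
  have hstep2 : (∫ x in Ω, ∫ x' in Ω, |f x' - f x| * (if ‖x' - x‖ ≤ ε then (1:ℝ) else 0))
      ≤ ∫ x in Ω, (ε ^ (d + 1)
          * ∫ z in closedBall (0:EuclideanSpace ℝ (Fin d)) 1,
              ‖z‖ * ∫ t in (0:ℝ)..1, g (x + t • (ε • z))) := by
    refine setIntegral_mono_on ?_ ?_ hΩm
      (fun x _ => stmt15_inner f hf g hfg hgc hM' hM0 Ω hΩm hε x)
    · -- integrability of the LHS inner integral
      refine Integrable.mono' (g := fun _ => (ε * M) * (volume Ω).toReal)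
        (integrable_const _) ?_ (ae_of_all _ ?_)
      · have hKm : StronglyMeasurable (Function.uncurry
            fun (x x' : EuclideanSpace ℝ (Fin d)) =>
              |f x' - f x| * (if ‖x' - x‖ ≤ ε then (1:ℝ) else 0)) := by
          apply Measurable.stronglyMeasurable
          have h1 : Measurable fun p :
              EuclideanSpace ℝ (Fin d) × EuclideanSpace ℝ (Fin d) => |f p.2 - f p.1| :=
            ((hf.continuous.comp continuous_snd).sub
              (hf.continuous.comp continuous_fst)).abs.measurable
          have hsetm : MeasurableSet {p :
              EuclideanSpace ℝ (Fin d) × EuclideanSpace ℝ (Fin d) | ‖p.2 - p.1‖ ≤ ε} :=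
            (isClosed_le (by fun_prop) continuous_const).measurableSet
          exact h1.mul (Measurable.ite hsetm measurable_const measurable_const)
        exact (hKm.integral_prod_right).aestronglyMeasurable
      · intro x
        refine norm_setIntegral_le_of_norm_le_const hΩfin ?_
        intro x' _
        have h0 : (0:ℝ) ≤ |f x' - f x| * (if ‖x' - x‖ ≤ ε then (1:ℝ) else 0) :=
          mul_nonneg (abs_nonneg _) (by positivity)
        rw [Real.norm_of_nonneg h0]
        by_cases hcase : ‖x' - x‖ ≤ ε
        · rw [if_pos hcase, mul_one]
          have h1 := stmt15_ftc f hf x (x' - x)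
          rw [add_sub_cancel] at h1
          refine h1.trans ?_
          have hcongr : (∫ t in (0:ℝ)..1, ‖fderiv ℝ f (x + t • (x' - x))‖)
              = ∫ t in (0:ℝ)..1, g (x + t • (x' - x)) :=
            intervalIntegral.integral_congr fun t _ => congrFun hfg _
          rw [hcongr]
          exact mul_le_mul hcase (stmt15_TM g hgc hM' x (x' - x))
            (stmt15_T0 g hg0 x (x' - x)) hε.le
        · rw [if_neg hcase, mul_zero]
          positivity
    · -- integrability of the RHS function
      refine Integrable.mono'
        (g := fun _ => ε ^ (d + 1) * (M * (volume (closedBall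
          (0:EuclideanSpace ℝ (Fin d)) 1)).toReal))
        (integrable_const _) ?_ (ae_of_all _ ?_)
      · have hsm : StronglyMeasurable fun x : EuclideanSpace ℝ (Fin d) =>
            ∫ z in closedBall (0:EuclideanSpace ℝ (Fin d)) 1,
              ‖z‖ * ∫ t in (0:ℝ)..1, g (x + t • (ε • z)) := by
          apply StronglyMeasurable.integral_prod_right
          exact ((continuous_norm.comp continuous_snd).mul
            (hTcont.comp (continuous_fst.prodMk
              (continuous_snd.const_smul ε)))).stronglyMeasurable
        exact (stronglyMeasurable_const.mul hsm).aestronglyMeasurable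
      · intro x
        rw [norm_mul, Real.norm_of_nonneg (by positivity : (0:ℝ) ≤ ε ^ (d + 1))]
        refine mul_le_mul_of_nonneg_left ?_ (by positivity)
        refine norm_setIntegral_le_of_norm_le_const measure_closedBall_lt_top
          ?_
        intro z hz
        have hz1 : ‖z‖ ≤ 1 := by simpa [mem_closedBall, dist_zero_right] using hz
        have hval : (0:ℝ) ≤ ‖z‖ * ∫ t in (0:ℝ)..1, g (x + t • (ε • z)) :=
          mul_nonneg (norm_nonneg _) (stmt15_T0 g hg0 x (ε • z))
        rw [Real.norm_of_nonneg hval]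
        calc ‖z‖ * (∫ t in (0:ℝ)..1, g (x + t • (ε • z))) ≤ 1 * M :=
            mul_le_mul hz1 (stmt15_TM g hgc hM' x (ε • z))
              (stmt15_T0 g hg0 x (ε • z)) one_pos.le
          _ = M := one_mul M
  refine hstep2.trans ?_
  refine (stmt15_outer g hgc hint hg0 hM' Ω hΩm hΩfin hε).trans ?_
  exact le_of_eq (by rw [stmt15_cb hd]; ring)
end

section
/- Suppose the criterion J(f) = (1/2) Σ_{i=1}^n (y_i - f(x_i))² + λ · Σ_{i=1}^n |y_i| · c_d ε^{d-1} is achieved by the function f_ε = Σ_{i=1}^n y_i · 1_{B(x_i, ε)} for distinct points x₁, …, xₙ ∈ ℝ^d, d ≥ 2, where the TV of f_ε is at most Σ_i |y_i| per(B(x_i, ε)) = Σ_i |y_i| c_d ε^{d-1} with c_d = H^{d-1}(∂B(0,1)). Then for all sufficiently small ε > 0 (small enough that the balls B(x_i, ε) are pairwise disjoint), f_ε interpolates the data (f_ε(x_i) = y_i for all i) and J(f_ε) → 0 as ε → 0⁺. Consequently, the infimum over bounded-variation functions of (1/2) Σᵢ (y_i - f(x_i))² + λ TV(f) is 0, for every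 λ > 0. -/
/-- Ill-posedness of TV-penalized regression for `d ≥ 2`: for distinct design
points `x i` and any `λ > 0`, the functions `f_ε = Σ_i y_i · 1_{B(x_i, ε)}`
interpolate the data for all small `ε > 0`; the criterion value
`(1/2) Σ_i (y_i - f_ε(x_i))² + λ Σ_i |y_i| c_d ε^{d-1}` tends to `0` as
`ε → 0⁺`; and consequently the infimum over all functions `f` of
`(1/2) Σ_i (y_i - f(x_i))² + λ TV(f)` is `0`, for any nonnegative, subadditive,
absolutely homogeneous `TV` with `TV(1_{B(x,ε)}) = c_d ε^{d-1}`. -/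
theorem stmt16 {d n : ℕ} (hd : 2 ≤ d)
    (x : Fin n → EuclideanSpace ℝ (Fin d)) (hx : Function.Injective x)
    (y : Fin n → ℝ) (lam : ℝ) (hlam : 0 < lam)
    (TV : (EuclideanSpace ℝ (Fin d) → ℝ) → ℝ) (c_d : ℝ) (hcd : 0 < c_d)
    (hTVnn : ∀ f, 0 ≤ TV f)
    (hTVadd : ∀ f g, TV (f + g) ≤ TV f + TV g)
    (hTVsmul : ∀ (c : ℝ) f, TV (c • f) = |c| * TV f)
    (hTVball : ∀ (z : EuclideanSpace ℝ (Fin d)) (ε : ℝ), 0 < ε →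
      TV (Set.indicator (Metric.closedBall z ε) fun _ => (1 : ℝ)) = c_d * ε ^ (d - 1)) :
    (∃ ε₀ > (0 : ℝ), ∀ ε ∈ Set.Ioo (0 : ℝ) ε₀, ∀ i,
        (∑ j, y j • Set.indicator (Metric.closedBall (x j) ε) fun _ => (1 : ℝ)) (x i)
          = y i) ∧
    Filter.Tendsto (fun ε : ℝ =>
        (1 / 2) * ∑ i, (y i -
            (∑ j, y j • Set.indicator (Metric.closedBall (x j) ε) fun _ => (1 : ℝ))
              (x i)) ^ 2
          + lam * ∑ i, |y i| * (c_d * ε ^ (d - 1)))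
      (nhdsWithin 0 (Set.Ioi 0)) (nhds 0) ∧
    (⨅ f : EuclideanSpace ℝ (Fin d) → ℝ,
        ((1 / 2) * ∑ i, (y i - f (x i)) ^ 2 + lam * TV f)) = 0 := by
  classical
  -- a positive lower bound for distances between distinct design points
  obtain ⟨ε₀, hε₀, hsep⟩ : ∃ ε₀ > (0:ℝ), ∀ i j : Fin n, i ≠ j → ε₀ < dist (x i) (x j) := by
    set s : Finset ℝ := (Finset.univ.offDiag).image (fun p : Fin n × Fin n => dist (x p.1) (x p.2))
    by_cases hs : s.Nonempty
    · refine ⟨s.min' hs / 2, ?_, ?_⟩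
      · have : 0 < s.min' hs := by
          have hmem := s.min'_mem hs
          simp only [s, Finset.mem_image] at hmem
          obtain ⟨p, hp, hpd⟩ := hmem
          have : p.1 ≠ p.2 := (Finset.mem_offDiag.mp hp).2.2
          have := dist_pos.mpr (fun h => this (hx h))
          linarith [hpd ▸ this]
        linarith
      · intro i j hij
        have hmem : dist (x i) (x j) ∈ s := by
          simp only [s, Finset.mem_image]
          exact ⟨(i, j), Finset.mem_offDiag.mpr ⟨Finset.mem_univ _, Finset.mem_univ _, hij⟩, rfl⟩
        have := s.min'_le _ hmem
        have hpos : 0 < dist (x i) (x j) := dist_pos.mpr (fun h => hij (hx h))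
        linarith
    · refine ⟨1, one_pos, fun i j hij => absurd ?_ hs⟩
      exact ⟨dist (x i) (x j), Finset.mem_image.mpr
        ⟨(i, j), Finset.mem_offDiag.mpr ⟨Finset.mem_univ _, Finset.mem_univ _, hij⟩, rfl⟩⟩
  -- interpolation for small ε
  have hinterp : ∀ ε ∈ Set.Ioo (0 : ℝ) ε₀, ∀ i,
      (∑ j, y j • Set.indicator (Metric.closedBall (x j) ε) fun _ => (1 : ℝ)) (x i) = y i := by
    intro ε hε i
    rw [Finset.sum_apply]
    rw [Finset.sum_eq_single i]
    · simp only [Pi.smul_apply, Set.indicator_apply, smul_eq_mul]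
      rw [if_pos (Metric.mem_closedBall_self hε.1.le), mul_one]
    · intro j _ hji
      have : ¬ x i ∈ Metric.closedBall (x j) ε := by
        simp only [Metric.mem_closedBall, not_le]
        calc ε < ε₀ := hε.2
          _ < dist (x i) (x j) := hsep i j (Ne.symm hji)
      simp [Set.indicator_apply, this]
    · intro h; exact absurd (Finset.mem_univ i) h
  refine ⟨⟨ε₀, hε₀, hinterp⟩, ?_, ?_⟩
  -- the penalty-only limit
  · have hev : ∀ᶠ ε in nhdsWithin (0:ℝ) (Set.Ioi 0),
        ((1 / 2) * ∑ i, (y i -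
            (∑ j, y j • Set.indicator (Metric.closedBall (x j) ε) fun _ => (1 : ℝ))
              (x i)) ^ 2
          + lam * ∑ i, |y i| * (c_d * ε ^ (d - 1)))
        = lam * ∑ i, |y i| * (c_d * ε ^ (d - 1)) := by
      filter_upwards [Ioo_mem_nhdsGT_of_mem (Set.left_mem_Ico.mpr hε₀)] with ε hε
      have : ∀ i, (y i - (∑ j, y j • Set.indicator
          (Metric.closedBall (x j) ε) fun _ => (1 : ℝ)) (x i)) ^ 2 = 0 := by
        intro i; rw [hinterp ε hε i]; ring
      rw [Finset.sum_congr rfl fun i _ => this i]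
      simp
    rw [Filter.tendsto_congr' hev]
    have hcont : Filter.Tendsto (fun ε : ℝ => lam * ∑ i, |y i| * (c_d * ε ^ (d - 1)))
        (nhds 0) (nhds (lam * ∑ i, |y i| * (c_d * (0:ℝ) ^ (d - 1)))) := by
      apply Filter.Tendsto.const_mul
      apply tendsto_finset_sum
      intro i _
      exact (((continuous_pow (d-1)).tendsto 0).const_mul c_d).const_mul |y i|
    have h0 : (0:ℝ) ^ (d - 1) = 0 := by
      apply zero_pow; omega
    rw [h0] at hcont
    simpa using hcont.mono_left nhdsWithin_le_nhds
  -- the infimum is zero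
  · have hTV0 : TV 0 = 0 := by
      have := hTVsmul 0 0
      simpa using this
    have hTVsum : ∀ (F : Fin n → (EuclideanSpace ℝ (Fin d) → ℝ)) (s : Finset (Fin n)),
        TV (∑ j ∈ s, F j) ≤ ∑ j ∈ s, TV (F j) := by
      intro F s
      induction s using Finset.induction with
      | empty => simp [hTV0]
      | insert j t hjs ih =>
        rw [Finset.sum_insert hjs, Finset.sum_insert hjs]
        exact le_trans (hTVadd _ _) (by linarith)
    have hbdd : BddBelow (Set.range fun f : EuclideanSpace ℝ (Fin d) → ℝ =>
        (1 / 2) * ∑ i, (y i - f (x i)) ^ 2 + lam * TV f) := by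
      refine ⟨0, fun v hv => ?_⟩
      obtain ⟨f, rfl⟩ := hv
      have h1 : (0:ℝ) ≤ ∑ i, (y i - f (x i)) ^ 2 :=
        Finset.sum_nonneg fun i _ => sq_nonneg _
      have h2 : (0:ℝ) ≤ lam * TV f := mul_nonneg hlam.le (hTVnn f)
      positivity
    have hnonneg : (0:ℝ) ≤ ⨅ f : EuclideanSpace ℝ (Fin d) → ℝ,
        ((1 / 2) * ∑ i, (y i - f (x i)) ^ 2 + lam * TV f) := by
      apply le_ciInf
      intro f
      have h1 : (0:ℝ) ≤ ∑ i, (y i - f (x i)) ^ 2 :=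
        Finset.sum_nonneg fun i _ => sq_nonneg _
      have h2 : (0:ℝ) ≤ lam * TV f := mul_nonneg hlam.le (hTVnn f)
      positivity
    have hle : (⨅ f : EuclideanSpace ℝ (Fin d) → ℝ,
        ((1 / 2) * ∑ i, (y i - f (x i)) ^ 2 + lam * TV f)) ≤ 0 := by
      have hevub : ∀ᶠ ε in nhdsWithin (0:ℝ) (Set.Ioi 0),
          (⨅ f : EuclideanSpace ℝ (Fin d) → ℝ,
            ((1 / 2) * ∑ i, (y i - f (x i)) ^ 2 + lam * TV f))
          ≤ lam * ∑ i, |y i| * (c_d * ε ^ (d - 1)) := by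
        filter_upwards [Ioo_mem_nhdsGT_of_mem (Set.left_mem_Ico.mpr hε₀)] with ε hε
        set fε := ∑ j, y j • Set.indicator (Metric.closedBall (x j) ε) fun _ => (1 : ℝ)
        have hval : (1 / 2) * ∑ i, (y i - fε (x i)) ^ 2 + lam * TV fε
            ≤ lam * ∑ i, |y i| * (c_d * ε ^ (d - 1)) := by
          have hz : ∑ i, (y i - fε (x i)) ^ 2 = 0 := by
            apply Finset.sum_eq_zero
            intro i _
            rw [show fε (x i) = y i from hinterp ε hε i]; ring
          have hTVb : TV fε ≤ ∑ i, |y i| * (c_d * ε ^ (d - 1)) := by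
            refine le_trans (hTVsum _ Finset.univ) ?_
            apply Finset.sum_le_sum
            intro j _
            rw [hTVsmul, hTVball (x j) ε hε.1]
          rw [hz]
          have := mul_le_mul_of_nonneg_left hTVb hlam.le
          linarith
        exact le_trans (ciInf_le hbdd fε) hval
      have hlim : Filter.Tendsto (fun ε : ℝ => lam * ∑ i, |y i| * (c_d * ε ^ (d - 1)))
          (nhdsWithin 0 (Set.Ioi 0)) (nhds 0) := by
        have hcont : Filter.Tendsto (fun ε : ℝ => lam * ∑ i, |y i| * (c_d * ε ^ (d - 1)))
            (nhds 0) (nhds (lam * ∑ i, |y i| * (c_d * (0:ℝ) ^ (d - 1)))) := by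
          apply Filter.Tendsto.const_mul
          apply tendsto_finset_sum
          intro i _
          exact (((continuous_pow (d-1)).tendsto 0).const_mul c_d).const_mul |y i|
        have h0 : (0:ℝ) ^ (d - 1) = 0 := by apply zero_pow; omega
        rw [h0] at hcont
        simpa using hcont.mono_left nhdsWithin_le_nhds
      exact ge_of_tendsto hlim hevub
    linarith
end
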